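/- For every integer n ≥ 3 there exist vectors w₁, …, wₙ ∈ ℝ² with ∑ᵢ wᵢ = 0 and ∑ᵢ |wᵢ| = 2 such that max over pairs i ≠ j of (|wᵢ| + |wⱼ| − |wᵢ + wⱼ|) = 2/n; hence the lower bound 2/n for planar polygons of perimeter 2 is tight. -/

import Mathlib

open Matrix Finset

/-- Euclidean norm on ℝ². -/
noncomputable def enorm2 (v : Fin 2 → ℝ) : ℝ := Real.sqrt (v 0 ^ 2 + v 1 ^ 2)

/-- Euclidean inner product on ℝ². -/
def inner2 (u v : Fin 2 → ℝ) : ℝ := u 0 * v 0 + u 1 * v 1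

/-- The square of a vector in ℝ², defined as for complex numbers:
`(ξ, η) ↦ (ξ² − η², 2ξη)`. -/
def vsq (v : Fin 2 → ℝ) : Fin 2 → ℝ := ![v 0 ^ 2 - v 1 ^ 2, 2 * v 0 * v 1]

/-- The largest singular value of a 2×2 real matrix (explicit closed form:
the singular values squared are the eigenvalues of `BᵀB`, which has trace
`tr(BᵀB)` and determinant `det(B)²`). -/
noncomputable def sigma1 (B : Matrix (Fin 2) (Fin 2) ℝ) : ℝ :=
  Real.sqrt (((Bᵀ * B).trace + Real.sqrt ((Bᵀ * B).trace ^ 2 - 4 * B.det ^ 2)) / 2)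

/-- The smallest singular value of a 2×2 real matrix. -/
noncomputable def sigma2 (B : Matrix (Fin 2) (Fin 2) ℝ) : ℝ :=
  Real.sqrt (((Bᵀ * B).trace - Real.sqrt ((Bᵀ * B).trace ^ 2 - 4 * B.det ^ 2)) / 2)

/-- The 2×2 submatrix of an n×2 matrix formed by rows `i` and `j`. -/
def rowPair {n : ℕ} (A : Matrix (Fin n) (Fin 2) ℝ) (i j : Fin n) :
    Matrix (Fin 2) (Fin 2) ℝ :=
  !![A i 0, A i 1; A j 0, A j 1]

set_option maxHeartbeats 800000 in
/-- the bound `2/n` for planar polygons of perimeter 2 is tight. -/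
theorem polygon_bound_tight (n : ℕ) (hn : 3 ≤ n) :
    ∃ w : Fin n → Fin 2 → ℝ, (∑ i, w i = 0) ∧ (∑ i, enorm2 (w i) = 2) ∧
      (∀ i j : Fin n, i ≠ j →
        enorm2 (w i) + enorm2 (w j) - enorm2 (w i + w j) ≤ 2 / n) ∧
      (∃ i j : Fin n, i ≠ j ∧
        enorm2 (w i) + enorm2 (w j) - enorm2 (w i + w j) = 2 / n) := by
  obtain ⟨m, rfl⟩ : ∃ m, n = m + 3 := ⟨n - 3, by omega⟩
  set N : ℝ := (m : ℝ) + 3 with hN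
  have hm0 : (0:ℝ) ≤ (m:ℝ) := Nat.cast_nonneg m
  have hN3 : (3 : ℝ) ≤ N := by rw [hN]; linarith
  have hNpos : (0 : ℝ) < N := by linarith
  have hN2 : (0 : ℝ) < N - 2 := by linarith
  set a : ℝ := (N - 1) / ((N - 2) * N) with ha_def
  set s : ℝ := (N - 1) / (2 * N) with hs_def
  set b : ℝ := (N + 1) / (2 * N) with hb_def
  set t : ℝ := Real.sqrt (1 / N) with ht_def
  have ha : 0 < a := by apply div_pos <;> nlinarith
  have hs : 0 < s := by apply div_pos <;> nlinarith
  have hb : 0 < b := by apply div_pos <;> nlinarith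
  have hN0 : N ≠ 0 := ne_of_gt hNpos
  have hN20 : N - 2 ≠ 0 := ne_of_gt hN2
  have ht2 : t ^ 2 = 1 / N := Real.sq_sqrt (by positivity)
  have hsb : s ^ 2 + 1 / N = b ^ 2 := by
    rw [hs_def, hb_def]; field_simp [hs_def, hb_def, hN0]; ring
  have hbs : b - s = 1 / N := by rw [hs_def, hb_def]; field_simp [hs_def, hb_def, hN0]; ring
  have hkey : (a - s) ^ 2 + 1 / N = (a + b - 2 / N) ^ 2 := by
    rw [ha_def, hs_def, hb_def]; field_simp [ha_def, hs_def, hb_def, hN0, hN20]; ring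
  have hb2 : 2 / N ≤ b := by
    rw [hb_def, div_le_div_iff₀ hNpos (by linarith)]; nlinarith
  have hpos : 0 < a + b - 2 / N := by linarith
  set u : Fin 2 → ℝ := ![a, 0] with hu_def
  set v : Fin 2 → ℝ := ![-s, t] with hv_def
  set v' : Fin 2 → ℝ := ![-s, -t] with hv'_def
  set g : ℕ → (Fin 2 → ℝ) := fun i => if i < m + 1 then u else if i = m + 1 then v else v' with hg_def
  have hcast : ((m + 3 : ℕ) : ℝ) = N := by rw [hN]; push_cast; ring
  have hm1 : ((m : ℝ) + 1) = N - 2 := by rw [hN]; ring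
  have h2N : 0 ≤ 2 / N := by positivity
  -- norms of the three vectors
  have hnu : enorm2 u = a := by
    rw [hu_def]; show Real.sqrt (a ^ 2 + 0 ^ 2) = a
    rw [show a ^ 2 + 0 ^ 2 = a ^ 2 by ring, Real.sqrt_sq ha.le]
  have hnv : enorm2 v = b := by
    rw [hv_def]; show Real.sqrt ((-s) ^ 2 + t ^ 2) = b
    rw [show (-s) ^ 2 + t ^ 2 = s ^ 2 + t ^ 2 by ring, ht2, hsb, Real.sqrt_sq hb.le]
  have hnv' : enorm2 v' = b := by
    rw [hv'_def]; show Real.sqrt ((-s) ^ 2 + (-t) ^ 2) = b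
    rw [show (-s) ^ 2 + (-t) ^ 2 = s ^ 2 + t ^ 2 by ring, ht2, hsb, Real.sqrt_sq hb.le]
  -- norms of pairwise sums
  have hadd : ∀ p q : Fin 2 → ℝ, enorm2 (p + q) = Real.sqrt ((p 0 + q 0) ^ 2 + (p 1 + q 1) ^ 2) := by
    intro p q; rfl
  have hnuu : enorm2 (u + u) = 2 * a := by
    rw [hadd, hu_def]
    show Real.sqrt ((a + a) ^ 2 + (0 + 0) ^ 2) = 2 * a
    rw [show (a + a) ^ 2 + (0 + 0) ^ 2 = (2 * a) ^ 2 by ring, Real.sqrt_sq (by linarith)]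
  have hnvv : enorm2 (v + v) = 2 * b := by
    rw [hadd, hv_def]
    show Real.sqrt ((-s + -s) ^ 2 + (t + t) ^ 2) = 2 * b
    rw [show (-s + -s) ^ 2 + (t + t) ^ 2 = 4 * (s ^ 2 + t ^ 2) by ring, ht2, hsb,
      show 4 * b ^ 2 = (2 * b) ^ 2 by ring, Real.sqrt_sq (by linarith)]
  have hnv'v' : enorm2 (v' + v') = 2 * b := by
    rw [hadd, hv'_def]
    show Real.sqrt ((-s + -s) ^ 2 + (-t + -t) ^ 2) = 2 * b
    rw [show (-s + -s) ^ 2 + (-t + -t) ^ 2 = 4 * (s ^ 2 + t ^ 2) by ring, ht2, hsb,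
      show 4 * b ^ 2 = (2 * b) ^ 2 by ring, Real.sqrt_sq (by linarith)]
  have hnuv : enorm2 (u + v) = a + b - 2 / N := by
    rw [hadd, hu_def, hv_def]
    show Real.sqrt ((a + -s) ^ 2 + (0 + t) ^ 2) = a + b - 2 / N
    rw [show (a + -s) ^ 2 + (0 + t) ^ 2 = (a - s) ^ 2 + t ^ 2 by ring, ht2, hkey,
      Real.sqrt_sq hpos.le]
  have hnuv' : enorm2 (u + v') = a + b - 2 / N := by
    rw [hadd, hu_def, hv'_def]
    show Real.sqrt ((a + -s) ^ 2 + (0 + -t) ^ 2) = a + b - 2 / N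
    rw [show (a + -s) ^ 2 + (0 + -t) ^ 2 = (a - s) ^ 2 + t ^ 2 by ring, ht2, hkey,
      Real.sqrt_sq hpos.le]
  have hnvv' : enorm2 (v + v') = 2 * s := by
    rw [hadd, hv_def, hv'_def]
    show Real.sqrt ((-s + -s) ^ 2 + (t + -t) ^ 2) = 2 * s
    rw [show (-s + -s) ^ 2 + (t + -t) ^ 2 = (2 * s) ^ 2 by ring, Real.sqrt_sq (by linarith)]
  have hdvv' : enorm2 v + enorm2 v' - enorm2 (v + v') = 2 / N := by
    rw [hnv, hnv', hnvv']
    linarith [hbs, show (2:ℝ)/N = 2*(1/N) by ring]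
  -- values of g
  have hgu : ∀ i : ℕ, i < m + 1 → g i = u := by
    intro i hi; rw [hg_def]; simp [hi]
  have hgv : g (m + 1) = v := by rw [hg_def]; simp
  have hgv' : g (m + 2) = v' := by rw [hg_def]; norm_num
  have hcases : ∀ k : Fin (m + 3), g k.val = u ∨ g k.val = v ∨ g k.val = v' := by
    intro k
    rcases lt_trichotomy (k.val) (m + 1) with h | h | h
    · exact Or.inl (hgu _ h)
    · exact Or.inr (Or.inl (h ▸ hgv))
    · have : k.val = m + 2 := by omega
      exact Or.inr (Or.inr (this ▸ hgv'))
  refine ⟨fun i => g i.val, ?_, ?_, ?_, ?_⟩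
  · -- sum is zero
    show ∑ i : Fin (m + 3), g i.val = 0
    rw [Fin.sum_univ_eq_sum_range (fun i => g i) (m + 3), Finset.sum_range_succ,
      Finset.sum_range_succ,
      Finset.sum_congr rfl (fun i hi => hgu i (Finset.mem_range.mp hi)),
      Finset.sum_const, Finset.card_range, hgv, hgv']
    funext k
    fin_cases k
    · show (m + 1 : ℕ) • u 0 + v 0 + v' 0 = 0
      rw [hu_def, hv_def, hv'_def]
      show (m + 1 : ℕ) • a + -s + -s = 0
      rw [nsmul_eq_mul]
      push_cast
      rw [hm1, ha_def, hs_def]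
      field_simp
      ring
    · show (m + 1 : ℕ) • u 1 + v 1 + v' 1 = 0
      rw [hu_def, hv_def, hv'_def]
      show (m + 1 : ℕ) • (0 : ℝ) + t + -t = 0
      rw [smul_zero]; ring
  · -- perimeter is 2
    show ∑ i : Fin (m + 3), enorm2 (g i.val) = 2
    rw [Fin.sum_univ_eq_sum_range (fun i => enorm2 (g i)) (m + 3), Finset.sum_range_succ,
      Finset.sum_range_succ,
      Finset.sum_congr rfl (fun i hi => by rw [hgu i (Finset.mem_range.mp hi)]),
      Finset.sum_const, Finset.card_range, hgv, hgv', hnu, hnv, hnv', nsmul_eq_mul]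
    push_cast
    rw [hm1, ha_def, hb_def]
    field_simp
    ring
  · -- all defects are at most 2/n
    intro i j _
    rw [show ((m + 3 : ℕ) : ℝ) = N from hcast]
    show enorm2 (g i.val) + enorm2 (g j.val) - enorm2 (g i.val + g j.val) ≤ 2 / N
    rcases hcases i with hi | hi | hi <;> rcases hcases j with hj | hj | hj <;> rw [hi, hj]
    · rw [hnu, hnuu]; linarith
    · rw [hnu, hnv, hnuv]; linarith
    · rw [hnu, hnv', hnuv']; linarith
    · rw [add_comm v u, hnu, hnv, hnuv]; linarith
    · rw [hnv, hnvv]; linarith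
    · rw [hnv, hnv', hnvv']
      linarith [hbs, show (2:ℝ)/N = 2*(1/N) by ring]
    · rw [add_comm v' u, hnu, hnv', hnuv']; linarith
    · rw [add_comm v' v, hnv, hnv', hnvv']
      linarith [hbs, show (2:ℝ)/N = 2*(1/N) by ring]
    · rw [hnv', hnv'v']; linarith
  · -- the equality witness
    refine ⟨⟨m + 1, by omega⟩, ⟨m + 2, by omega⟩, by simp [Fin.ext_iff], ?_⟩
    rw [show ((m + 3 : ℕ) : ℝ) = N from hcast]
    show enorm2 (g (m + 1)) + enorm2 (g (m + 2)) - enorm2 (g (m + 1) + g (m + 2)) = 2 / N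
    rw [hgv, hgv']
    rw [hnv, hnv', hnvv']
    linarith [hbs, show (2:ℝ)/N = 2*(1/N) by ring]
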